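/- Let u(t) be the Hastings–McLeod solution of Painlevé II: u'' = 2u³ + t·u with u(t) ~ Ai(t) as t → +∞. Define v(t) = ∫ₜ^∞ u², E(t) = exp(-∫ₜ^∞ u), and let f, g solve the linear ODE system ∂_w (f, g)ᵀ = [[u², -wu - u'], [-wu + u', w² - t - u²]] (f, g)ᵀ with f(t,0) = g(t,0) = E(t). If additionally f and g satisfy the companion Lax equation in t, then F(t,w) = f(t,w)·exp(-∫ₜ^∞ v) satisfies the PDE ∂_t F + (2/β)∂_w² F + (t - w²)∂_w F = 0 with β = 2. -/

import Mathlib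

open MeasureTheory Set Filter

private lemma aux_lin_growth {φ φd : ℝ → ℝ} (hφ : ∀ x, HasDerivAt φ (φd x) x)
    {a δ : ℝ} (hδ : 0 < δ) (h : ∀ x, a ≤ x → δ ≤ φd x)
    (hlim : Tendsto φ atTop (nhds 0)) : False := by
  have hψ : ∀ x : ℝ, HasDerivAt (fun y => φ y - δ * y) (φd x - δ) x := by
    intro x
    have h := (hφ x).sub ((hasDerivAt_id' x).const_mul δ)
    exact h.congr_deriv (by ring)
  have hmono : MonotoneOn (fun y => φ y - δ * y) (Ici a) := by
    apply monotoneOn_of_deriv_nonneg (convex_Ici a)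
    · exact (Continuous.continuousOn (by
        exact (Differentiable.continuous fun x => (hψ x).differentiableAt)))
    · exact fun x _ => (hψ x).differentiableAt.differentiableWithinAt
    · intro x hx
      rw [(hψ x).deriv]
      have : a ≤ x := le_of_lt (by simpa using hx)
      linarith [h x this]
  have hge : ∀ x, a ≤ x → δ * x + (φ a - δ * a) ≤ φ x := by
    intro x hx
    have := hmono (self_mem_Ici) hx hx
    simp only at this
    linarith
  have htop : Tendsto φ atTop atTop := by
    apply tendsto_atTop_mono' _ _ (by
      have h1 : Tendsto (fun x : ℝ => δ * x) atTop atTop :=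
        Tendsto.const_mul_atTop hδ tendsto_id
      exact tendsto_atTop_add_const_right atTop (φ a - δ * a) h1)
    filter_upwards [eventually_ge_atTop a] with x hx using hge x hx
  exact not_tendsto_atTop_of_tendsto_nhds hlim htop

private lemma aux_split (h : ℝ → ℝ) (hi : ∀ t, IntegrableOn h (Ioi t)) (x : ℝ) :
    (∫ s in Ioi x, h s) = (∫ s in Ioi (0:ℝ), h s) - ∫ s in (0:ℝ)..x, h s := by
  rcases le_or_gt 0 x with hx | hx
  · have hsplit : (∫ s in Ioi (0:ℝ), h s) = (∫ s in Ioc (0:ℝ) x, h s) + ∫ s in Ioi x, h s := by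
      rw [← MeasureTheory.setIntegral_union (Ioc_disjoint_Ioi le_rfl) measurableSet_Ioi
        ((hi 0).mono_set Ioc_subset_Ioi_self) (hi x), Ioc_union_Ioi_eq_Ioi hx]
    rw [intervalIntegral.integral_of_le hx]
    linarith
  · have hsplit : (∫ s in Ioi x, h s) = (∫ s in Ioc x 0, h s) + ∫ s in Ioi (0:ℝ), h s := by
      rw [← MeasureTheory.setIntegral_union (Ioc_disjoint_Ioi le_rfl) measurableSet_Ioi
        ((hi x).mono_set Ioc_subset_Ioi_self) (hi 0), Ioc_union_Ioi_eq_Ioi hx.le]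
    rw [intervalIntegral.integral_of_ge hx.le]
    linarith

private lemma aux_tail {h : ℝ → ℝ} (hc : Continuous h) (hi : ∀ t, IntegrableOn h (Ioi t)) (t : ℝ) :
    HasDerivAt (fun x => ∫ s in Ioi x, h s) (-h t) t := by
  have hI : HasDerivAt (fun y => ∫ s in (0:ℝ)..y, h s) (h t) t :=
    intervalIntegral.integral_hasDerivAt_right (hc.intervalIntegrable 0 t)
      (hc.stronglyMeasurable.stronglyMeasurableAtFilter) hc.continuousAt
  have h2 : HasDerivAt (fun y => (∫ s in Ioi (0:ℝ), h s) - ∫ s in (0:ℝ)..y, h s) (-h t) t :=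
    hI.const_sub _
  exact h2.congr_of_eventuallyEq (Eventually.of_forall fun y => aux_split h hi y)



-- Airy decay: t * Ai t ^ 2 → 0
private lemma aux_airy (Ai Ai' u : ℝ → ℝ)
    (hAi' : ∀ t, HasDerivAt Ai (Ai' t) t)
    (hAi'' : ∀ t, HasDerivAt Ai' (t * Ai t) t)
    (hAi0 : Tendsto Ai atTop (nhds 0))
    (hHM : Tendsto (fun t => u t / Ai t) atTop (nhds 1)) :
    Tendsto (fun t => t * Ai t ^ 2) atTop (nhds 0) := by
  have hAiNe : ∀ᶠ t in atTop, (1:ℝ)/2 < u t / Ai t :=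
    hHM.eventually (eventually_gt_nhds (by norm_num))
  obtain ⟨T₁, hT₁⟩ := eventually_atTop.mp hAiNe
  set T := max T₁ 1 with hTdef
  have hT1 : (1:ℝ) ≤ T := le_max_right _ _
  have hAine : ∀ t, T ≤ t → Ai t ≠ 0 := by
    intro t ht h0
    have := hT₁ t (le_trans (le_max_left _ _) ht)
    rw [h0, div_zero] at this; norm_num at this
  have hAicont : Continuous Ai := Differentiable.continuous fun x => (hAi' x).differentiableAt
  set σ : ℝ := if 0 < Ai T then 1 else -1 with hσdef
  have hσ2 : σ * σ = 1 := by
    rcases le_or_gt (Ai T) 0 with h | h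
    · simp [hσdef, not_lt.mpr h]
    · simp [hσdef, h]
  have hσT : 0 < σ * Ai T := by
    rcases lt_or_ge 0 (Ai T) with h | h
    · simpa [hσdef, h] using h
    · have hne := hAine T le_rfl
      have hlt : Ai T < 0 := lt_of_le_of_ne h hne
      rw [hσdef, if_neg (not_lt.mpr h)]
      nlinarith
  have hApos : ∀ t, T ≤ t → 0 < σ * Ai t := by
    intro t ht
    by_contra hle
    push_neg at hle
    have hcont : ContinuousOn (fun s => σ * Ai s) (Icc T t) :=
      (continuous_const.mul hAicont).continuousOn
    have h0mem : (0:ℝ) ∈ Icc (σ * Ai t) (σ * Ai T) := ⟨hle, hσT.le⟩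
    obtain ⟨x, hx, hx0⟩ := intermediate_value_Icc' ht hcont h0mem
    have hσne : σ ≠ 0 := by
      rcases le_or_gt (Ai T) 0 with h | h
      · rw [hσdef, if_neg (not_lt.mpr h)]; norm_num
      · rw [hσdef, if_pos h]; norm_num
    have : Ai x = 0 := by
      simp only at hx0
      rcases mul_eq_zero.mp hx0 with h | h
      · exact absurd h hσne
      · exact h
    exact hAine x hx.1 this
  have hA0 : Tendsto (fun t => σ * Ai t) atTop (nhds 0) := by
    simpa using hAi0.const_mul σ
  have hA : ∀ x, HasDerivAt (fun s => σ * Ai s) (σ * Ai' x) x := fun x => (hAi' x).const_mul σ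
  have hA' : ∀ x : ℝ, HasDerivAt (fun s => σ * Ai' s) (x * (σ * Ai x)) x := by
    intro x
    have := (hAi'' x).const_mul σ
    exact this.congr_deriv (by ring)
  -- Step 1: σ * Ai' ≤ 0 on [T, ∞)
  have hA'np : ∀ a, T ≤ a → σ * Ai' a ≤ 0 := by
    intro a ha
    by_contra hpos
    push_neg at hpos
    have hmono : MonotoneOn (fun s => σ * Ai' s) (Ici a) := by
      apply monotoneOn_of_deriv_nonneg (convex_Ici a)
      · exact (Differentiable.continuous fun x => (hA' x).differentiableAt).continuousOn
      · exact fun x _ => (hA' x).differentiableAt.differentiableWithinAt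
      · intro x hx
        rw [(hA' x).deriv]
        have hax : a < x := by simpa using hx
        have hx0 : 0 < x := lt_of_lt_of_le (by linarith) (le_of_lt hax)
        exact le_of_lt (mul_pos hx0 (hApos x (le_trans ha hax.le)))
    exact aux_lin_growth hA hpos
      (fun x hx => by simpa using hmono self_mem_Ici hx hx) hA0
  -- antitone A on Ici T
  have hAanti : AntitoneOn (fun s => σ * Ai s) (Ici T) := by
    apply antitoneOn_of_deriv_nonpos (convex_Ici T)
    · exact (continuous_const.mul hAicont).continuousOn
    · exact fun x _ => (hA x).differentiableAt.differentiableWithinAt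
    · intro x hx
      rw [(hA x).deriv]
      exact hA'np x (le_of_lt (by simpa using hx))
  -- Step 2: B := σAi' + k σAi ≤ 0 on [T,∞), k = sqrt T
  set k : ℝ := Real.sqrt T with hkdef
  have hk2 : k ^ 2 = T := Real.sq_sqrt (by linarith)
  have hk1 : 1 ≤ k := by
    rw [hkdef]
    exact Real.one_le_sqrt.mpr hT1
  have hk0 : 0 < k := by linarith
  have hB : ∀ x : ℝ, HasDerivAt (fun s => σ * Ai' s + k * (σ * Ai s))
      (x * (σ * Ai x) + k * (σ * Ai' x)) x :=
    fun x => (hA' x).add ((hA x).const_mul k)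
  have hBnp : ∀ a, T ≤ a → σ * Ai' a + k * (σ * Ai a) ≤ 0 := by
    intro a ha
    by_contra hBa
    push_neg at hBa
    have hC : ∀ x : ℝ, HasDerivAt (fun s => (σ * Ai' s + k * (σ * Ai s)) * Real.exp (-(k * s)))
        ((x * (σ * Ai x) + k * (σ * Ai' x)) * Real.exp (-(k * x))
          + (σ * Ai' x + k * (σ * Ai x)) * (Real.exp (-(k * x)) * (-(k * 1)))) x := by
      intro x
      exact (hB x).mul (((hasDerivAt_id x).const_mul k).neg.exp)
    have hCmono : MonotoneOn (fun s => (σ * Ai' s + k * (σ * Ai s)) * Real.exp (-(k * s))) (Ici a) := by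
      apply monotoneOn_of_deriv_nonneg (convex_Ici a)
      · exact (Differentiable.continuous fun x => (hC x).differentiableAt).continuousOn
      · exact fun x _ => (hC x).differentiableAt.differentiableWithinAt
      · intro x hx
        rw [(hC x).deriv]
        have hax : a < x := by simpa using hx
        have heq : (x * (σ * Ai x) + k * (σ * Ai' x)) * Real.exp (-(k * x))
            + (σ * Ai' x + k * (σ * Ai x)) * (Real.exp (-(k * x)) * (-(k * 1)))
            = Real.exp (-(k * x)) * ((x - k ^ 2) * (σ * Ai x)) := by ring
        rw [heq]
        have h1 : 0 < σ * Ai x := hApos x (by linarith)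
        have h2 : (0:ℝ) ≤ x - k ^ 2 := by rw [hk2]; linarith
        positivity
    -- B x ≥ B a * exp (k*(x-a))
    have hBge : ∀ x, a ≤ x → (σ * Ai' a + k * (σ * Ai a)) * Real.exp (k * (x - a))
        ≤ σ * Ai' x + k * (σ * Ai x) := by
      intro x hx
      have := hCmono self_mem_Ici hx hx
      simp only at this
      have h4 := mul_le_mul_of_nonneg_right this (Real.exp_pos (k * x)).le
      have e1 : Real.exp (-(k * a)) * Real.exp (k * x) = Real.exp (k * (x - a)) := by
        rw [← Real.exp_add]; ring_nf
      have e2 : Real.exp (-(k * x)) * Real.exp (k * x) = 1 := by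
        rw [← Real.exp_add]; simp
      calc (σ * Ai' a + k * (σ * Ai a)) * Real.exp (k * (x - a))
          = ((σ * Ai' a + k * (σ * Ai a)) * Real.exp (-(k * a))) * Real.exp (k * x) := by
            rw [mul_assoc, e1]
        _ ≤ ((σ * Ai' x + k * (σ * Ai x)) * Real.exp (-(k * x))) * Real.exp (k * x) := h4
        _ = σ * Ai' x + k * (σ * Ai x) := by rw [mul_assoc, e2, mul_one]
    -- choose a' where B is large
    have htop : Tendsto (fun x => (σ * Ai' a + k * (σ * Ai a)) * Real.exp (k * (x - a))) atTop atTop := by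
      apply Tendsto.const_mul_atTop hBa
      apply Real.tendsto_exp_atTop.comp
      have : Tendsto (fun x : ℝ => k * x) atTop atTop := Tendsto.const_mul_atTop hk0 tendsto_id
      have h2 : Tendsto (fun x : ℝ => k * x - k * a) atTop atTop :=
        tendsto_atTop_add_const_right atTop _ this
      refine h2.congr fun x => by ring
    obtain ⟨a₂, ha₂⟩ := eventually_atTop.mp
      (htop.eventually_ge_atTop (k * (σ * Ai a) + 1))
    have hclaim : ∀ x, max a a₂ ≤ x → (1:ℝ) ≤ σ * Ai' x := by
      intro x hx
      have hxa : a ≤ x := le_trans (le_max_left _ _) hx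
      have h1 := hBge x hxa
      have h2 := ha₂ x (le_trans (le_max_right _ _) hx)
      have h3 : σ * Ai x ≤ σ * Ai a := hAanti (mem_Ici.mpr ha) (mem_Ici.mpr (le_trans ha hxa)) hxa
      nlinarith
    exact aux_lin_growth hA one_pos hclaim hA0
  -- Step 3: exponential decay of A
  have hD : ∀ x : ℝ, HasDerivAt (fun s => (σ * Ai s) * Real.exp (k * s))
      ((σ * Ai' x) * Real.exp (k * x) + (σ * Ai x) * (Real.exp (k * x) * (k * 1))) x :=
    fun x => (hA x).mul (((hasDerivAt_id x).const_mul k).exp)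
  have hDanti : AntitoneOn (fun s => (σ * Ai s) * Real.exp (k * s)) (Ici T) := by
    apply antitoneOn_of_deriv_nonpos (convex_Ici T)
    · exact (Differentiable.continuous fun x => (hD x).differentiableAt).continuousOn
    · exact fun x _ => (hD x).differentiableAt.differentiableWithinAt
    · intro x hx
      rw [(hD x).deriv]
      have hTx : T ≤ x := le_of_lt (by simpa using hx)
      have := hBnp x hTx
      have hepos : 0 < Real.exp (k * x) := Real.exp_pos _
      nlinarith
  have hdecay : ∀ t, T ≤ t → σ * Ai t ≤ ((σ * Ai T) * Real.exp (k * T)) * Real.exp (-(k * t)) := by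
    intro t ht
    have h1 := hDanti (self_mem_Ici) (mem_Ici.mpr ht) ht
    simp only at h1
    have hepos : 0 < Real.exp (k * t) := Real.exp_pos _
    have : Real.exp (-(k * t)) = 1 / Real.exp (k * t) := by
      rw [Real.exp_neg]; ring
    rw [this]
    rw [mul_one_div, le_div_iff₀ hepos]
    linarith
  -- Step 4: squeeze
  set M : ℝ := (σ * Ai T) * Real.exp (k * T) with hMdef
  have hM0 : 0 < M := mul_pos hσT (Real.exp_pos _)
  have hg0 : Tendsto (fun t : ℝ => M ^ 2 / (2 * k) * ((2 * k * t) * Real.exp (-(2 * k * t)))) atTop (nhds 0) := by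
    have hL : Tendsto (fun y : ℝ => y * Real.exp (-y)) atTop (nhds 0) := by
      simpa using Real.tendsto_pow_mul_exp_neg_atTop_nhds_zero 1
    have hcomp : Tendsto (fun t : ℝ => (2 * k * t) * Real.exp (-(2 * k * t))) atTop (nhds 0) :=
      hL.comp (Tendsto.const_mul_atTop (by linarith) tendsto_id)
    simpa using hcomp.const_mul (M ^ 2 / (2 * k))
  apply squeeze_zero' (g := fun t : ℝ => M ^ 2 / (2 * k) * ((2 * k * t) * Real.exp (-(2 * k * t))))
  · filter_upwards [eventually_ge_atTop (0:ℝ)] with t ht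
    positivity
  · filter_upwards [eventually_ge_atTop T] with t ht
    have ht0 : (0:ℝ) ≤ t := by linarith
    have h1 : 0 < σ * Ai t := hApos t ht
    have h2 : σ * Ai t ≤ M * Real.exp (-(k * t)) := hdecay t ht
    have h3 : Ai t ^ 2 = (σ * Ai t) ^ 2 := by nlinarith [hσ2]
    have h4 : (σ * Ai t) ^ 2 ≤ (M * Real.exp (-(k * t))) ^ 2 := by nlinarith
    have h5 : (M * Real.exp (-(k * t))) ^ 2 = M ^ 2 * Real.exp (-(2 * k * t)) := by
      rw [sq, sq, mul_mul_mul_comm, ← Real.exp_add]; ring_nf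
    have h6 : t * Ai t ^ 2 ≤ M ^ 2 * (t * Real.exp (-(2 * k * t))) := by
      rw [h3]
      calc t * (σ * Ai t) ^ 2 ≤ t * (M * Real.exp (-(k * t))) ^ 2 := by nlinarith
        _ = M ^ 2 * (t * Real.exp (-(2 * k * t))) := by rw [h5]; ring
    calc t * Ai t ^ 2 ≤ M ^ 2 * (t * Real.exp (-(2 * k * t))) := h6
      _ = M ^ 2 / (2 * k) * ((2 * k * t) * Real.exp (-(2 * k * t))) := by
          field_simp
  · exact hg0

private lemma aux_key (Ai Ai' u u' v : ℝ → ℝ)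
    (hAi' : ∀ t, HasDerivAt Ai (Ai' t) t)
    (hAi'' : ∀ t, HasDerivAt Ai' (t * Ai t) t)
    (hAi0 : Tendsto Ai atTop (nhds 0))
    (hu' : ∀ t, HasDerivAt u (u' t) t)
    (hPII : ∀ t, HasDerivAt u' (2 * u t ^ 3 + t * u t) t)
    (hHM : Tendsto (fun t => u t / Ai t) atTop (nhds 1))
    (hint2 : ∀ t, IntegrableOn (fun s => u s ^ 2) (Ioi t))
    (hv : v = fun t => ∫ s in Ioi t, u s ^ 2) :
    ∀ t, u' t ^ 2 = u t ^ 4 + t * u t ^ 2 + v t := by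
  have hv' : ∀ t, HasDerivAt v (-(u t ^ 2)) t := by
    intro t
    rw [hv]
    exact aux_tail ((Differentiable.continuous fun x => (hu' x).differentiableAt).pow 2) hint2 t
  -- φ is constant
  have hφ : ∀ s : ℝ, HasDerivAt (fun t => u' t ^ 2 - u t ^ 4 - t * u t ^ 2 - v t) 0 s := by
    intro s
    have h1 : HasDerivAt (fun t => u' t ^ 2) (2 * u' s ^ 1 * (2 * u s ^ 3 + s * u s)) s :=
      (hPII s).pow 2
    have h2 : HasDerivAt (fun t => u t ^ 4) (4 * u s ^ 3 * u' s) s := by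
      exact ((hu' s).pow 4).congr_deriv (by norm_num)
    have h3 : HasDerivAt (fun t => t * u t ^ 2) (1 * u s ^ 2 + s * (2 * u s ^ 1 * u' s)) s :=
      (hasDerivAt_id s).mul ((hu' s).pow 2)
    have := ((h1.sub h2).sub h3).sub (hv' s)
    exact this.congr_deriv (by ring)
  have hconst : ∀ s : ℝ, u' s ^ 2 - u s ^ 4 - s * u s ^ 2 - v s
      = u' 0 ^ 2 - u 0 ^ 4 - 0 * u 0 ^ 2 - v 0 := by
    intro s
    exact is_const_of_deriv_eq_zero (fun x => (hφ x).differentiableAt)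
      (fun x => (hφ x).deriv) s 0
  set c₀ : ℝ := u' 0 ^ 2 - u 0 ^ 4 - 0 * u 0 ^ 2 - v 0 with hc₀def
  -- limits
  have hAiNe : ∀ᶠ t in atTop, (1:ℝ)/2 < u t / Ai t :=
    hHM.eventually (eventually_gt_nhds (by norm_num))
  have hu0 : Tendsto u atTop (nhds 0) := by
    have h1 : Tendsto (fun t => (u t / Ai t) * Ai t) atTop (nhds (1 * 0)) := hHM.mul hAi0
    rw [one_mul] at h1
    refine h1.congr' ?_
    filter_upwards [hAiNe] with t ht
    have hAine : Ai t ≠ 0 := by intro h; rw [h, div_zero] at ht; norm_num at ht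
    field_simp
  have hv0 : Tendsto v atTop (nhds 0) := by
    have h1 := intervalIntegral_tendsto_integral_Ioi 0 (hint2 0) tendsto_id
    have h2 : Tendsto (fun t : ℝ => (∫ s in Ioi (0:ℝ), u s ^ 2) - ∫ s in (0:ℝ)..t, u s ^ 2)
        atTop (nhds ((∫ s in Ioi (0:ℝ), u s ^ 2) - ∫ s in Ioi (0:ℝ), u s ^ 2)) :=
      tendsto_const_nhds.sub h1
    rw [sub_self] at h2
    refine h2.congr fun t => ?_
    rw [hv]
    exact (aux_split _ hint2 t).symm
  have htu2 : Tendsto (fun t => t * u t ^ 2) atTop (nhds 0) := by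
    have hAsq := aux_airy Ai Ai' u hAi' hAi'' hAi0 hHM
    have h1 : Tendsto (fun t => (u t / Ai t) * (u t / Ai t) * (t * Ai t ^ 2)) atTop
        (nhds (1 * 1 * 0)) := (hHM.mul hHM).mul hAsq
    rw [mul_one, mul_zero] at h1
    refine h1.congr' ?_
    filter_upwards [hAiNe] with t ht
    have hAine : Ai t ≠ 0 := by intro h; rw [h, div_zero] at ht; norm_num at ht
    field_simp
  have hu'2 : Tendsto (fun t => u' t ^ 2) atTop (nhds c₀) := by
    have h1 : Tendsto (fun t => c₀ + (u t ^ 4 + t * u t ^ 2 + v t)) atTop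
        (nhds (c₀ + (0 + 0 + 0))) := by
      apply tendsto_const_nhds.add
      exact ((by simpa using hu0.pow 4 : Tendsto (fun t => u t ^ 4) atTop (nhds 0)).add
        htu2).add hv0
    simp only [add_zero, zero_add] at h1
    refine h1.congr fun t => ?_
    have := hconst t
    linarith
  have hc₀0 : c₀ = 0 := by
    have hge : 0 ≤ c₀ := ge_of_tendsto' hu'2 fun t => sq_nonneg _
    rcases eq_or_lt_of_le hge with h | hpos
    · exact h.symm
    set δ : ℝ := Real.sqrt (c₀ / 2) with hδdef
    have hδ0 : 0 < δ := Real.sqrt_pos.mpr (by linarith)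
    have hev : ∀ᶠ t in atTop, c₀ / 2 < u' t ^ 2 :=
      hu'2.eventually (eventually_gt_nhds (by linarith))
    obtain ⟨a, ha⟩ := eventually_atTop.mp hev
    have habs : ∀ x, a ≤ x → δ ≤ |u' x| := by
      intro x hx
      have h1 : c₀ / 2 ≤ u' x ^ 2 := (ha x hx).le
      calc δ = Real.sqrt (c₀ / 2) := rfl
        _ ≤ Real.sqrt (u' x ^ 2) := Real.sqrt_le_sqrt h1
        _ = |u' x| := Real.sqrt_sq_eq_abs _
    have hne : ∀ x, a ≤ x → u' x ≠ 0 := by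
      intro x hx h0
      have := habs x hx
      rw [h0, abs_zero] at this
      linarith
    have hu'cont : Continuous u' := Differentiable.continuous fun x => (hPII x).differentiableAt
    rcases lt_or_gt_of_ne (hne a le_rfl) with hneg | hposa
    · -- u' a < 0 : apply to -u
      have hclaim : ∀ x, a ≤ x → δ ≤ -u' x := by
        intro x hx
        have hxneg : u' x < 0 := by
          rcases lt_or_gt_of_ne (hne x hx) with h | h
          · exact h
          · exfalso
            have h0mem : (0:ℝ) ∈ Icc (u' a) (u' x) := ⟨hneg.le, h.le⟩
            obtain ⟨z, hz, hz0⟩ := intermediate_value_Icc hx (hu'cont.continuousOn) h0mem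
            exact hne z hz.1 hz0
        have := habs x hx
        rw [abs_of_neg hxneg] at this
        linarith
      exact absurd (aux_lin_growth (fun x => (hu' x).neg) hδ0 hclaim (by have h := hu0.neg; rw [neg_zero] at h; exact h)) id
    · have hclaim : ∀ x, a ≤ x → δ ≤ u' x := by
        intro x hx
        have hxpos : 0 < u' x := by
          rcases lt_or_gt_of_ne (hne x hx) with h | h
          · exfalso
            have h0mem : (0:ℝ) ∈ Icc (u' x) (u' a) := ⟨h.le, hposa.le⟩
            obtain ⟨z, hz, hz0⟩ := intermediate_value_Icc' hx (hu'cont.continuousOn) h0mem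
            exact hne z hz.1 hz0
          · exact h
        have := habs x hx
        rw [abs_of_pos hxpos] at this
        linarith
      exact absurd (aux_lin_growth hu' hδ0 hclaim hu0) id
  intro t
  have h := hconst t
  rw [hc₀0] at h
  linarith


/-- Bloemendal–Virág verification at `β = 2`: if `u` is the Hastings–McLeod
solution of Painlevé II (`u'' = 2u³ + tu`, `u ~ Ai` at `+∞`),
`v(t) = ∫ₜ^∞ u²`, `E(t) = exp(-∫ₜ^∞ u)`, and `(f,g)` solve the Painlevé II Lax
pair in `w` and in `t` with initial condition `f(t,0) = g(t,0) = E(t)`, then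
`F(t,w) = f(t,w) exp(-∫ₜ^∞ v)` solves `∂ₜF + ∂_w²F + (t - w²)∂_wF = 0`. -/
theorem stmt_18
    (Ai Ai' u u' v E : ℝ → ℝ) (f g F : ℝ → ℝ → ℝ)
    (hAi' : ∀ t, HasDerivAt Ai (Ai' t) t)
    (hAi'' : ∀ t, HasDerivAt Ai' (t * Ai t) t)
    (hAi0 : Tendsto Ai atTop (nhds 0))
    (hu' : ∀ t, HasDerivAt u (u' t) t)
    (hPII : ∀ t, HasDerivAt u' (2 * u t ^ 3 + t * u t) t)
    (hHM : Tendsto (fun t => u t / Ai t) atTop (nhds 1))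
    (hint1 : ∀ t, IntegrableOn u (Ioi t))
    (hint2 : ∀ t, IntegrableOn (fun s => u s ^ 2) (Ioi t))
    (hv : v = fun t => ∫ s in Ioi t, u s ^ 2)
    (hintv : ∀ t, IntegrableOn v (Ioi t))
    (hE : E = fun t => Real.exp (-∫ s in Ioi t, u s))
    (hfw : ∀ t w, HasDerivAt (fun x => f t x)
      (u t ^ 2 * f t w + (-(w * u t) - u' t) * g t w) w)
    (hgw : ∀ t w, HasDerivAt (fun x => g t x)
      ((-(w * u t) + u' t) * f t w + (w ^ 2 - t - u t ^ 2) * g t w) w)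
    (hic : ∀ t, f t 0 = E t ∧ g t 0 = E t)
    (hft : ∀ t w, HasDerivAt (fun s => f s w) (u t * g t w) t)
    (hgt : ∀ t w, HasDerivAt (fun s => g s w) (u t * f t w - w * g t w) t)
    (hF : F = fun t w => f t w * Real.exp (-∫ s in Ioi t, v s)) :
    ∀ t w : ℝ,
      deriv (fun s => F s w) t + deriv (deriv (fun x => F t x)) w +
        (t - w ^ 2) * deriv (fun x => F t x) w = 0 := by
  subst hF
  intro t w
  -- the first integral of Painlevé II
  have key := aux_key Ai Ai' u u' v hAi' hAi'' hAi0 hu' hPII hHM hint2 hv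
  -- v is continuous
  have hv' : ∀ t, HasDerivAt v (-(u t ^ 2)) t := by
    intro t
    rw [hv]
    exact aux_tail ((Differentiable.continuous fun x => (hu' x).differentiableAt).pow 2) hint2 t
  have hvcont : Continuous v := Differentiable.continuous fun x => (hv' x).differentiableAt
  set c : ℝ → ℝ := fun s => Real.exp (-∫ x in Ioi s, v x) with hcdef
  have hc : ∀ s, HasDerivAt c (v s * c s) s := by
    intro s
    have h1 : HasDerivAt (fun x => ∫ y in Ioi x, v y) (-v s) s := aux_tail hvcont hintv s
    have h2 := h1.neg.exp
    simpa [hcdef, mul_comm] using h2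
  -- t-derivative
  have h1 : HasDerivAt (fun s => f s w * c s) (u t * g t w * c t + f t w * (v t * c t)) t :=
    (hft t w).mul (hc t)
  -- first w-derivative
  have hFw : ∀ y, HasDerivAt (fun x => f t x * c t)
      ((u t ^ 2 * f t y + (-(y * u t) - u' t) * g t y) * c t) y :=
    fun y => (hfw t y).mul_const _
  have hd2 : deriv (fun x => f t x * c t)
      = fun y => (u t ^ 2 * f t y + (-(y * u t) - u' t) * g t y) * c t :=
    funext fun y => (hFw y).deriv
  -- second w-derivative
  have hlin : HasDerivAt (fun y : ℝ => -(y * u t) - u' t) (-u t) w := by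
    simpa using ((hasDerivAt_id w).mul_const (u t)).neg.sub_const (u' t)
  have hin : HasDerivAt (fun y => u t ^ 2 * f t y + (-(y * u t) - u' t) * g t y)
      (u t ^ 2 * (u t ^ 2 * f t w + (-(w * u t) - u' t) * g t w)
        + ((-u t) * g t w + (-(w * u t) - u' t)
            * ((-(w * u t) + u' t) * f t w + (w ^ 2 - t - u t ^ 2) * g t w))) w :=
    ((hfw t w).const_mul (u t ^ 2)).add (hlin.mul (hgw t w))
  have h2 : HasDerivAt (fun y => (u t ^ 2 * f t y + (-(y * u t) - u' t) * g t y) * c t)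
      ((u t ^ 2 * (u t ^ 2 * f t w + (-(w * u t) - u' t) * g t w)
        + ((-u t) * g t w + (-(w * u t) - u' t)
            * ((-(w * u t) + u' t) * f t w + (w ^ 2 - t - u t ^ 2) * g t w))) * c t) w :=
    hin.mul_const _
  show deriv (fun s => f s w * c s) t + deriv (deriv (fun x => f t x * c t)) w
      + (t - w ^ 2) * deriv (fun x => f t x * c t) w = 0
  rw [h1.deriv, hd2, h2.deriv]
  simp only []
  linear_combination (-(f t w * c t)) * key t
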